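/- Let E, J, R, K ∈ ℝ^{n×n} with E^T = E positive semidefinite, J = −J^T, R = R^T positive semidefinite, let B ∈ ℝ^{n×m}, let ε ≥ 0, and set E_ε = E + ε K^T K. Let u : ℝ → ℝ^m be continuous and let x : ℝ → ℝ^n be continuously differentiable with E_ε ẋ(s) = (J − R) x(s) + B u(s) for all s, and set y(s) = B^T x(s) and H(x) = (1/2) x^T E x. Then for all t ∈ ℝ and h ≥ 0: H(x(t+h)) − H(x(t)) ≤ ∫_t^{t+h} y(s)^T u(s) ds + (ε/2)·| ‖K x(t+h)‖₂² − ‖K x(t)‖₂² |. -/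

import Mathlib

open Matrix

private lemma hasDerivAt_quadForm {n : ℕ} (M : Matrix (Fin n) (Fin n) ℝ) (hM : Mᵀ = M)
    (x x' : ℝ → Fin n → ℝ) (hx : ∀ t, HasDerivAt x (x' t) t) (s : ℝ) :
    HasDerivAt (fun s => x s ⬝ᵥ M.mulVec (x s)) (2 * (x' s ⬝ᵥ M.mulVec (x s))) s := by
  have hxi : ∀ i (s : ℝ), HasDerivAt (fun s => x s i) (x' s i) s :=
    fun i s => (hasDerivAt_pi.mp (hx s)) i
  have hsym : ∀ i j, M i j = M j i := by
    intro i j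
    conv_lhs => rw [← hM]
    exact M.transpose_apply i j
  have h1 : HasDerivAt (fun s => ∑ i, ∑ j, x s i * (M i j * x s j))
      (∑ i, ∑ j, (x' s i * (M i j * x s j) + x s i * (M i j * x' s j))) s := by
    refine HasDerivAt.fun_sum fun i _ => HasDerivAt.fun_sum fun j _ => ?_
    exact (hxi i s).mul ((hxi j s).const_mul (M i j))
  have hfun : (fun s => x s ⬝ᵥ M.mulVec (x s)) = fun s => ∑ i, ∑ j, x s i * (M i j * x s j) := by
    funext s
    simp [dotProduct, mulVec, Finset.mul_sum]
  have hval : (∑ i, ∑ j, (x' s i * (M i j * x s j) + x s i * (M i j * x' s j)))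
      = 2 * (x' s ⬝ᵥ M.mulVec (x s)) := by
    have hswap : ∑ i, ∑ j, x s i * (M i j * x' s j) = ∑ i, ∑ j, x' s i * (M i j * x s j) := by
      rw [Finset.sum_comm]
      refine Finset.sum_congr rfl fun j _ => Finset.sum_congr rfl fun i _ => ?_
      rw [hsym i j]; ring
    have hdot : x' s ⬝ᵥ M.mulVec (x s) = ∑ i, ∑ j, x' s i * (M i j * x s j) := by
      simp [dotProduct, mulVec, Finset.mul_sum]
    calc (∑ i, ∑ j, (x' s i * (M i j * x s j) + x s i * (M i j * x' s j)))
        = (∑ i, ∑ j, x' s i * (M i j * x s j)) + ∑ i, ∑ j, x s i * (M i j * x' s j) := by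
          simp only [Finset.sum_add_distrib]
      _ = 2 * (x' s ⬝ᵥ M.mulVec (x s)) := by rw [hswap, hdot]; ring
  rw [hfun, ← hval]
  exact h1

theorem regularized_phs_dissipation_estimate {n m : ℕ}
    (E J R K : Matrix (Fin n) (Fin n) ℝ)
    (hE : Eᵀ = E) (hEpsd : E.PosSemidef) (hJ : J = -Jᵀ) (hR : Rᵀ = R) (hRpsd : R.PosSemidef)
    (B : Matrix (Fin n) (Fin m) ℝ)
    (ε : ℝ) (hε : 0 ≤ ε)
    (u : ℝ → Fin m → ℝ) (hu : Continuous u)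
    (x x' : ℝ → Fin n → ℝ)
    (hx : ∀ t, HasDerivAt x (x' t) t) (hx' : Continuous x')
    (hsys : ∀ s, (E + ε • (Kᵀ * K)).mulVec (x' s) = (J - R).mulVec (x s) + B.mulVec (u s))
    (y : ℝ → Fin m → ℝ) (hy : ∀ s, y s = Bᵀ.mulVec (x s)) :
    ∀ t : ℝ, ∀ h : ℝ, 0 ≤ h →
      (1 / 2 : ℝ) * (x (t + h) ⬝ᵥ E.mulVec (x (t + h))) -
          (1 / 2 : ℝ) * (x t ⬝ᵥ E.mulVec (x t)) ≤
        (∫ s in t..(t + h), y s ⬝ᵥ u s) +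
          (ε / 2) * |(K.mulVec (x (t + h)) ⬝ᵥ K.mulVec (x (t + h))) -
            (K.mulVec (x t) ⬝ᵥ K.mulVec (x t))| := by
  intro t h hh
  set M : Matrix (Fin n) (Fin n) ℝ := E + ε • (Kᵀ * K) with hMdef
  have hM : Mᵀ = M := by
    rw [hMdef, transpose_add, hE, transpose_smul, transpose_mul, transpose_transpose]
  have hxc : Continuous x := continuous_iff_continuousAt.2 fun s => (hx s).continuousAt
  -- decomposition of the quadratic forms
  have hdecomp : ∀ v : Fin n → ℝ,
      v ⬝ᵥ M.mulVec v = v ⬝ᵥ E.mulVec v + ε * (K.mulVec v ⬝ᵥ K.mulVec v) := by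
    intro v
    have : v ⬝ᵥ (Kᵀ * K).mulVec v = K.mulVec v ⬝ᵥ K.mulVec v := by
      rw [← mulVec_mulVec, dotProduct_mulVec, vecMul_transpose]
    rw [hMdef, add_mulVec, dotProduct_add, smul_mulVec, dotProduct_smul, smul_eq_mul, this]
  -- pointwise energy balance bound
  have hbound : ∀ s : ℝ, x' s ⬝ᵥ M.mulVec (x s) ≤ y s ⬝ᵥ u s := by
    intro s
    have h1 : x' s ⬝ᵥ M.mulVec (x s) = M.mulVec (x' s) ⬝ᵥ x s := by
      rw [dotProduct_mulVec]; conv_lhs => rw [← hM, vecMul_transpose]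
    have hJx : J.mulVec (x s) ⬝ᵥ x s = 0 := by
      have : J.mulVec (x s) ⬝ᵥ x s = x s ⬝ᵥ J.mulVec (x s) := dotProduct_comm _ _
      have h2 : x s ⬝ᵥ J.mulVec (x s) = -(J.mulVec (x s) ⬝ᵥ x s) := by
        rw [dotProduct_mulVec]
        conv_lhs => rw [hJ]
        rw [vecMul_neg, vecMul_transpose, neg_dotProduct]
      linarith [this, h2]
    have hRx : 0 ≤ R.mulVec (x s) ⬝ᵥ x s := by
      have := hRpsd.dotProduct_mulVec_nonneg (x s)
      rw [dotProduct_comm]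
      simpa using this
    have hBu : B.mulVec (u s) ⬝ᵥ x s = y s ⬝ᵥ u s := by
      rw [hy, dotProduct_comm, dotProduct_mulVec, ← mulVec_transpose]
    rw [h1, hsys s, add_dotProduct, sub_mulVec, sub_dotProduct, hJx, hBu]
    linarith
  -- continuity of the integrands
  have hcont1 : Continuous fun s => x' s ⬝ᵥ M.mulVec (x s) := by
    simp only [dotProduct, mulVec]
    refine continuous_finset_sum _ fun i _ => ?_
    exact ((continuous_apply i).comp hx').mul
      (continuous_finset_sum _ fun j _ => continuous_const.mul ((continuous_apply j).comp hxc))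
  have hcont2 : Continuous fun s => y s ⬝ᵥ u s := by
    have hyc : Continuous y := by
      have : Continuous fun s => Bᵀ.mulVec (x s) := by
        refine continuous_pi fun i => ?_
        simp only [mulVec, dotProduct]
        exact continuous_finset_sum _ fun j _ => continuous_const.mul ((continuous_apply j).comp hxc)
      simpa [funext hy] using this
    simp only [dotProduct]
    exact continuous_finset_sum _ fun i _ =>
      ((continuous_apply i).comp hyc).mul ((continuous_apply i).comp hu)
  -- FTC
  have hftc : (∫ s in t..(t + h), 2 * (x' s ⬝ᵥ M.mulVec (x s)))
      = x (t + h) ⬝ᵥ M.mulVec (x (t + h)) - x t ⬝ᵥ M.mulVec (x t) := by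
    refine intervalIntegral.integral_eq_sub_of_hasDerivAt
      (fun s _ => hasDerivAt_quadForm M hM x x' hx s) ?_
    exact ((continuous_const.mul hcont1)).intervalIntegrable _ _
  have hint1 : IntervalIntegrable (fun s => x' s ⬝ᵥ M.mulVec (x s)) MeasureTheory.volume t (t + h) :=
    hcont1.intervalIntegrable _ _
  have hint2 : IntervalIntegrable (fun s => y s ⬝ᵥ u s) MeasureTheory.volume t (t + h) :=
    hcont2.intervalIntegrable _ _
  have hmono : (∫ s in t..(t + h), x' s ⬝ᵥ M.mulVec (x s)) ≤ ∫ s in t..(t + h), y s ⬝ᵥ u s :=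
    intervalIntegral.integral_mono_on (by linarith) hint1 hint2 fun s _ => hbound s
  rw [intervalIntegral.integral_const_mul] at hftc
  have key : x (t + h) ⬝ᵥ M.mulVec (x (t + h)) - x t ⬝ᵥ M.mulVec (x t)
      ≤ 2 * ∫ s in t..(t + h), y s ⬝ᵥ u s := by
    rw [← hftc]; linarith
  have hd1 := hdecomp (x (t + h))
  have hd2 := hdecomp (x t)
  set c := K.mulVec (x (t + h)) ⬝ᵥ K.mulVec (x (t + h))
  set d := K.mulVec (x t) ⬝ᵥ K.mulVec (x t)
  have habs : -(c - d) ≤ |c - d| := neg_le_abs _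
  have hεabs : ε * (-(c - d)) ≤ ε * |c - d| := mul_le_mul_of_nonneg_left habs hε
  linarith [key, hd1, hd2, hεabs]
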